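/- For every λ ∈ [0,1], the two-qubit state ψ_λ = v_λ v_λᴴ with v_λ = √λ |00⟩ + √(1−λ) |11⟩ has stabilizer 2-Rényi entropy M₂(ψ_λ) = −log₂( 4(λ−1)λ(1−2λ)² + 1 ). -/

import Mathlib

noncomputable section
open Matrix Kronecker

/-- The four single-qubit Pauli matrices I, X, Y, Z. -/
def pauli : Fin 4 → Matrix (Fin 2) (Fin 2) ℂ :=
  ![1, !![0, 1; 1, 0], !![0, -Complex.I; Complex.I, 0], !![1, 0; 0, -1]]

/-- Two-qubit Pauli strings σ₁ ⊗ σ₂. -/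
def pauli2 (a : Fin 4 × Fin 4) : Matrix (Fin 2 × Fin 2) (Fin 2 × Fin 2) ℂ :=
  pauli a.1 ⊗ₖ pauli a.2

/-- Rank-one density matrix v vᴴ. -/
def dm {ι : Type*} (v : ι → ℂ) : Matrix ι ι ℂ := Matrix.vecMulVec v (star v)

/-- Stabilizer 2-Rényi entropy of a two-qubit state. -/
def M2two (ψ : Matrix (Fin 2 × Fin 2) (Fin 2 × Fin 2) ℂ) : ℝ :=
  - Real.logb 2 ((1 / 4) * ∑ a : Fin 4 × Fin 4, ‖(pauli2 a * ψ).trace‖ ^ 4)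

/-- The Schmidt state √λ |00⟩ + √(1−λ) |11⟩. -/
def vlam (l : ℝ) : Fin 2 × Fin 2 → ℂ := fun p =>
  if p = ((0 : Fin 2), (0 : Fin 2)) then (Real.sqrt l : ℂ)
  else if p = ((1 : Fin 2), (1 : Fin 2)) then (Real.sqrt (1 - l) : ℂ) else 0

theorem stabilizer_entropy_schmidt_state (l : ℝ) (hl : l ∈ Set.Icc (0 : ℝ) 1) :
    M2two (dm (vlam l)) = - Real.logb 2 (4 * (l - 1) * l * (1 - 2 * l) ^ 2 + 1) := by
  obtain ⟨h0, h1⟩ := hl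
  have ha : Real.sqrt l ^ 2 = l := Real.sq_sqrt h0
  have hb : Real.sqrt (1 - l) ^ 2 = 1 - l := Real.sq_sqrt (by linarith)
  have key : (1 / 4 : ℝ) * ∑ x : Fin 4 × Fin 4, ‖(pauli2 x * dm (vlam l)).trace‖ ^ 4
      = 4 * (l - 1) * l * (1 - 2 * l) ^ 2 + 1 := by
    have tr : ∀ x : Fin 4 × Fin 4, (pauli2 x * dm (vlam l)).trace
        = ∑ i : Fin 2 × Fin 2, ∑ j : Fin 2 × Fin 2, pauli2 x i j * dm (vlam l) j i := by
      intro x; simp [Matrix.trace, Matrix.mul_apply, Matrix.diag]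
    rw [Fintype.sum_prod_type]
    simp only [Fin.sum_univ_four, tr]
    simp only [Fintype.sum_prod_type, Fin.sum_univ_two,
      pauli2, pauli, dm, vlam, kroneckerMap_apply, vecMulVec_apply,
      Matrix.cons_val', Matrix.cons_val_zero, Matrix.cons_val_one, Matrix.head_cons,
      Matrix.head_fin_const, Matrix.one_apply, Matrix.cons_val_fin_one, Matrix.empty_val', Matrix.cons_val]
    norm_num [vlam, Prod.mk.injEq, Prod.ext_iff, Complex.ext_iff, Complex.norm_def,
      Complex.normSq_apply, Fin.ext_iff]
    have h4 : ∀ x : ℝ, Real.sqrt (x * x) ^ 4 = (x * x) ^ 2 := by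
      intro x
      rw [show (4:ℕ) = 2 * 2 from rfl, pow_mul, Real.sq_sqrt (mul_self_nonneg x)]
    simp only [h4]
    linear_combination (((Real.sqrt l)^2*(Real.sqrt l)^2 + l*l)*((Real.sqrt l)^2 + l)
        + 14*(Real.sqrt (1-l))^2*(Real.sqrt (1-l))^2*((Real.sqrt l)^2 + l)) * ha
      + (((Real.sqrt (1-l))^2*(Real.sqrt (1-l))^2 + (1-l)*(1-l))*((Real.sqrt (1-l))^2 + (1-l))
        + 14*l*l*((Real.sqrt (1-l))^2 + (1-l))) * hb
  rw [M2two, key]
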